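/- Let C₀ > 0, H ≥ 1 an integer, ι > 0; set b_i = C₀·√(H³·ι/i) for i ≥ 1 and β_n = 2·Σ_{i=1}^n α_n^i·b_i for n ≥ 0 (so β_0 = 0). Then for every n ≥ 1, 2·C₀·√(H³·ι/n) ≤ β_n ≤ 4·C₀·√(H³·ι/n). -/

import Mathlib

open scoped BigOperators

noncomputable section

/-- The per-step learning rate `α_t = (H+1)/(H+t)`. -/
def alphaT (H t : ℕ) : ℝ := (H + 1) / (H + t)

/-- The aggregated learning-rate weights `α_n^i`:
`α_0^0 = 1`, `α_n^0 = 0` for `n ≥ 1`, and `α_n^i = α_i ∏_{j=i+1}^n (1 - α_j)` for `1 ≤ i ≤ n`. -/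
def alphaW (H n i : ℕ) : ℝ :=
  if i = 0 then (if n = 0 then 1 else 0)
  else alphaT H i * ∏ j ∈ Finset.Icc (i + 1) n, (1 - alphaT H j)

/-- The exploration bonus `b_i = C₀ √(H³ ι / i)`. -/
def bGen (H : ℕ) (C0 ι : ℝ) (i : ℕ) : ℝ := C0 * Real.sqrt ((H : ℝ) ^ 3 * ι / i)

/-- The aggregated bonus `β_n = 2 ∑_{i=1}^n α_n^i b_i` (so `β_0 = 0`). -/
def betaGen (H : ℕ) (C0 ι : ℝ) (n : ℕ) : ℝ :=
  2 * ∑ i ∈ Finset.Icc 1 n, alphaW H n i * bGen H C0 ι i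

lemma alphaT_nonneg (H j : ℕ) : 0 ≤ alphaT H j := by
  unfold alphaT; positivity

lemma alphaT_le_one (H j : ℕ) (hj : 1 ≤ j) : alphaT H j ≤ 1 := by
  unfold alphaT
  have hj' : (1:ℝ) ≤ j := by exact_mod_cast hj
  have h0 : (0:ℝ) ≤ H := Nat.cast_nonneg H
  rw [div_le_one (by linarith)]
  linarith

lemma alphaW_nonneg (H n i : ℕ) : 0 ≤ alphaW H n i := by
  unfold alphaW
  split
  · split <;> norm_num
  · apply mul_nonneg (alphaT_nonneg H i)
    apply Finset.prod_nonneg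
    intro j hj
    have hj1 : 1 ≤ j := by have := (Finset.mem_Icc.mp hj).1; omega
    linarith [alphaT_le_one H j hj1]

lemma alphaW_self (H n : ℕ) (hn : 1 ≤ n) : alphaW H n n = alphaT H n := by
  unfold alphaW
  rw [if_neg (by omega), Finset.Icc_eq_empty (by omega), Finset.prod_empty, mul_one]

lemma alphaW_succ (H n i : ℕ) (h1 : 1 ≤ i) (h2 : i ≤ n) :
    alphaW H (n+1) i = (1 - alphaT H (n+1)) * alphaW H n i := by
  unfold alphaW
  rw [if_neg (by omega), if_neg (by omega),
    Finset.prod_Icc_succ_top (by omega : i + 1 ≤ n + 1)]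
  ring

lemma alphaT_one (H : ℕ) : alphaT H 1 = 1 := by
  unfold alphaT
  rw [Nat.cast_one, div_self]
  positivity

lemma sum_alphaW (H n : ℕ) (hn : 1 ≤ n) :
    ∑ i ∈ Finset.Icc 1 n, alphaW H n i = 1 := by
  induction n, hn using Nat.le_induction with
  | base => simp [alphaW_self H 1 le_rfl, alphaT_one]
  | succ n hn ih =>
    rw [Finset.sum_Icc_succ_top (by omega : 1 ≤ n + 1)]
    have : ∑ i ∈ Finset.Icc 1 n, alphaW H (n+1) i
        = (1 - alphaT H (n+1)) * ∑ i ∈ Finset.Icc 1 n, alphaW H n i := by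
      rw [Finset.mul_sum]
      apply Finset.sum_congr rfl
      intro i hi
      rw [Finset.mem_Icc] at hi
      exact alphaW_succ H n i hi.1 hi.2
    rw [this, ih, alphaW_self H (n+1) (by omega)]
    ring

lemma sqrt_pos_of_one_le {m : ℕ} (hm : 1 ≤ m) : 0 < Real.sqrt m := by
  apply Real.sqrt_pos.mpr
  exact_mod_cast Nat.pos_of_ne_zero (by omega)

lemma sum_lower (H n : ℕ) (hn : 1 ≤ n) :
    (Real.sqrt n)⁻¹ ≤ ∑ i ∈ Finset.Icc 1 n, alphaW H n i * (Real.sqrt i)⁻¹ := by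
  have h : (Real.sqrt n)⁻¹ = ∑ i ∈ Finset.Icc 1 n, alphaW H n i * (Real.sqrt n)⁻¹ := by
    rw [← Finset.sum_mul, sum_alphaW H n hn, one_mul]
  rw [h]
  apply Finset.sum_le_sum
  intro i hi
  rw [Finset.mem_Icc] at hi
  apply mul_le_mul_of_nonneg_left _ (alphaW_nonneg H n i)
  apply inv_anti₀ (sqrt_pos_of_one_le hi.1)
  exact Real.sqrt_le_sqrt (by exact_mod_cast hi.2)

lemma step_ineq (H n : ℕ) (hn : 1 ≤ n) :
    (1 - alphaT H (n+1)) * (2 * (Real.sqrt n)⁻¹) + alphaT H (n+1) * (Real.sqrt (n+1))⁻¹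
      ≤ 2 * (Real.sqrt (n+1))⁻¹ := by
  have hD : (0:ℝ) < (H:ℝ) + n + 1 := by positivity
  have hα : alphaT H (n+1) = ((H:ℝ)+1) / ((H:ℝ) + n + 1) := by
    unfold alphaT; push_cast; ring_nf
  set a := Real.sqrt n with ha_def
  set b := Real.sqrt (n+1) with hb_def
  have ha0 : 0 < a := sqrt_pos_of_one_le hn
  have hb0 : 0 < b := by
    apply Real.sqrt_pos.mpr; positivity
  have ha : a * a = n := Real.mul_self_sqrt (by positivity)
  have hb : b * b = (n:ℝ) + 1 := Real.mul_self_sqrt (by positivity)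
  have hab : a * b ≤ (n:ℝ) + 1/2 := by
    have h1 : a * b = Real.sqrt ((n:ℝ) * ((n:ℝ)+1)) := by
      rw [ha_def, hb_def, ← Real.sqrt_mul (Nat.cast_nonneg n)]
    rw [h1]
    have h2 : (n:ℝ) * ((n:ℝ)+1) ≤ ((n:ℝ) + 1/2)^2 := by nlinarith
    calc Real.sqrt ((n:ℝ) * ((n:ℝ)+1)) ≤ Real.sqrt (((n:ℝ)+1/2)^2) := Real.sqrt_le_sqrt h2
      _ = (n:ℝ) + 1/2 := Real.sqrt_sq (by positivity)
  rw [hα]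
  have expand : (1 - ((H:ℝ)+1)/((H:ℝ)+n+1)) = (n:ℝ)/((H:ℝ)+n+1) := by
    field_simp
    ring
  rw [expand]
  rw [div_mul_eq_mul_div, div_mul_eq_mul_div, ← add_div, div_le_iff₀ hD]
  have hgoal : (n:ℝ) * (2 * a⁻¹) + ((H:ℝ)+1) * b⁻¹ ≤ 2 * b⁻¹ * ((H:ℝ)+n+1) := by
    have h1 : (n:ℝ) * (2 * a⁻¹) = 2 * a := by
      field_simp
      nlinarith
    rw [h1]
    rw [← sub_nonneg]
    have h2 : 2 * b⁻¹ * ((H:ℝ)+n+1) - (2*a + ((H:ℝ)+1)*b⁻¹)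
        = (2*((H:ℝ)+n+1) - 2*(a*b) - ((H:ℝ)+1)) * b⁻¹ := by
      field_simp
      ring
    rw [h2]
    apply mul_nonneg _ (le_of_lt (inv_pos.mpr hb0))
    have hH0 : (0:ℝ) ≤ H := Nat.cast_nonneg H
    linarith
  linarith [hgoal]

lemma sum_upper (H n : ℕ) (hn : 1 ≤ n) :
    ∑ i ∈ Finset.Icc 1 n, alphaW H n i * (Real.sqrt i)⁻¹ ≤ 2 * (Real.sqrt n)⁻¹ := by
  induction n, hn using Nat.le_induction with
  | base => simp [alphaW_self H 1 le_rfl, alphaT_one]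
  | succ n hn ih =>
    rw [Finset.sum_Icc_succ_top (by omega : 1 ≤ n + 1)]
    have hrw : ∑ i ∈ Finset.Icc 1 n, alphaW H (n+1) i * (Real.sqrt i)⁻¹
        = (1 - alphaT H (n+1)) * ∑ i ∈ Finset.Icc 1 n, alphaW H n i * (Real.sqrt i)⁻¹ := by
      rw [Finset.mul_sum]
      apply Finset.sum_congr rfl
      intro i hi
      rw [Finset.mem_Icc] at hi
      rw [alphaW_succ H n i hi.1 hi.2]; ring
    rw [hrw, alphaW_self H (n+1) (by omega)]
    have h1a : (0:ℝ) ≤ 1 - alphaT H (n+1) := by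
      linarith [alphaT_le_one H (n+1) (by omega)]
    have step1 : (1 - alphaT H (n+1)) * ∑ i ∈ Finset.Icc 1 n, alphaW H n i * (Real.sqrt i)⁻¹
        ≤ (1 - alphaT H (n+1)) * (2 * (Real.sqrt n)⁻¹) := mul_le_mul_of_nonneg_left ih h1a
    have := step_ineq H n hn
    push_cast at *
    linarith

/-- For every `n ≥ 1`, `2 C₀ √(H³ι/n) ≤ β_n ≤ 4 C₀ √(H³ι/n)`. -/
theorem betaGen_bounds (H : ℕ) (hH : 1 ≤ H) (C0 ι : ℝ) (hC0 : 0 < C0) (hι : 0 < ι)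
    (n : ℕ) (hn : 1 ≤ n) :
    2 * C0 * Real.sqrt ((H : ℝ) ^ 3 * ι / n) ≤ betaGen H C0 ι n ∧
    betaGen H C0 ι n ≤ 4 * C0 * Real.sqrt ((H : ℝ) ^ 3 * ι / n) := by
  have hH1 : (1:ℝ) ≤ (H:ℝ) := by exact_mod_cast hH
  have hA : (0:ℝ) < (H:ℝ)^3 * ι := by positivity
  have hb : ∀ i ∈ Finset.Icc 1 n, bGen H C0 ι i
      = C0 * Real.sqrt ((H:ℝ)^3 * ι) * (Real.sqrt i)⁻¹ := by
    intro i hi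
    unfold bGen
    rw [Real.sqrt_div hA.le, div_eq_mul_inv]
    ring
  have hbeta : betaGen H C0 ι n
      = 2 * (C0 * Real.sqrt ((H:ℝ)^3 * ι))
        * ∑ i ∈ Finset.Icc 1 n, alphaW H n i * (Real.sqrt i)⁻¹ := by
    unfold betaGen
    rw [show (∑ i ∈ Finset.Icc 1 n, alphaW H n i * bGen H C0 ι i)
        = (C0 * Real.sqrt ((H:ℝ)^3 * ι))
          * ∑ i ∈ Finset.Icc 1 n, alphaW H n i * (Real.sqrt i)⁻¹ by
      rw [Finset.mul_sum]
      apply Finset.sum_congr rfl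
      intro i hi
      rw [hb i hi]; ring]
    ring
  have htarget : Real.sqrt ((H:ℝ)^3 * ι / n)
      = Real.sqrt ((H:ℝ)^3 * ι) * (Real.sqrt n)⁻¹ := by
    rw [Real.sqrt_div hA.le, div_eq_mul_inv]
  have hK : (0:ℝ) ≤ 2 * (C0 * Real.sqrt ((H:ℝ)^3 * ι)) := by positivity
  constructor
  · rw [hbeta, htarget]
    calc 2 * C0 * (Real.sqrt ((H:ℝ)^3 * ι) * (Real.sqrt n)⁻¹)
        = 2 * (C0 * Real.sqrt ((H:ℝ)^3 * ι)) * (Real.sqrt n)⁻¹ := by ring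
      _ ≤ 2 * (C0 * Real.sqrt ((H:ℝ)^3 * ι))
          * ∑ i ∈ Finset.Icc 1 n, alphaW H n i * (Real.sqrt i)⁻¹ :=
        mul_le_mul_of_nonneg_left (sum_lower H n hn) hK
  · rw [hbeta, htarget]
    calc 2 * (C0 * Real.sqrt ((H:ℝ)^3 * ι))
          * ∑ i ∈ Finset.Icc 1 n, alphaW H n i * (Real.sqrt i)⁻¹
        ≤ 2 * (C0 * Real.sqrt ((H:ℝ)^3 * ι)) * (2 * (Real.sqrt n)⁻¹) :=
        mul_le_mul_of_nonneg_left (sum_upper H n hn) hK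
      _ = 4 * C0 * (Real.sqrt ((H:ℝ)^3 * ι) * (Real.sqrt n)⁻¹) := by ring
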